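/- Let N ≥ 3, 0 < μ < 2, α ∈ ℝ, and m > 0. Then the constrained energy functional is bounded from below: inf { E[Ψ] : Ψ ∈ ℰ, M[Ψ] = m } > -∞, where the infimum is taken over the energy space ℰ of the star graph. -/

import Mathlib

open Real MeasureTheory
open scoped ENNReal NNReal

section Aux

open Set

lemma sq_abs_integrable {f : ℝ → ℂ} (hf : MemLp f 2 (volume.restrict (Ioi (0:ℝ)))) :
    IntegrableOn (fun x => ‖f x‖ ^ 2) (Ioi (0:ℝ)) volume := by
  have h := hf.integrable_norm_rpow (by norm_num) (by norm_num)
  have heq : (fun x => ‖f x‖ ^ (2 : ℝ≥0∞).toReal) = fun x => ‖f x‖ ^ 2 := by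
    funext x
    rw [show ((2:ℝ≥0∞)).toReal = ((2:ℕ):ℝ) by norm_num, Real.rpow_natCast]
  rwa [heq] at h

lemma pointwise_master {f g : ℝ → ℂ}
    (hf2 : MemLp f 2 (volume.restrict (Ioi (0:ℝ))))
    (hg2 : MemLp g 2 (volume.restrict (Ioi (0:ℝ))))
    (hloc : ∀ x : ℝ, 0 ≤ x → IntervalIntegrable g volume 0 x)
    (hftc : ∀ x : ℝ, 0 ≤ x → f x = f 0 + ∫ s in (0:ℝ)..x, g s)
    {A B : ℝ} (hA : ∫ x in Ioi (0:ℝ), ‖f x‖ ^ 2 ≤ A)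
    (hB : ∫ x in Ioi (0:ℝ), ‖g x‖ ^ 2 ≤ B)
    {x L t ε : ℝ} (hx : 0 ≤ x) (hL : 0 < L) (ht : 0 < t) (hε : 0 < ε) :
    ‖f x‖ ≤ Real.sqrt ((A + ε)/L) + B/(2*t) + t*L/2 := by
  have intf2 := sq_abs_integrable hf2
  have intg2 := sq_abs_integrable hg2
  have hsub : Ioc x (x+L) ⊆ Ioi (0:ℝ) := fun y hy => lt_of_le_of_lt hx hy.1
  -- find a point y with small |f y|²
  have hyex : ∃ y ∈ Ioc x (x+L), ‖f y‖ ^ 2 < (A+ε)/L := by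
    by_contra h
    push_neg at h
    have h1 : (A+ε)/L * (volume (Ioc x (x+L))).toReal
        ≤ ∫ y in Ioc x (x+L), ‖f y‖^2 :=
      by have := setIntegral_ge_of_const_le measurableSet_Ioc (by simp) h (intf2.mono_set hsub)
         rw [measureReal_def, smul_eq_mul, mul_comm] at this; exact this
    have h2 : ∫ y in Ioc x (x+L), ‖f y‖^2
        ≤ ∫ y in Ioi 0, ‖f y‖^2 :=
      setIntegral_mono_set intf2 (.of_forall fun y => sq_nonneg _)
        (HasSubset.Subset.eventuallyLE hsub)
    rw [Real.volume_Ioc, show x + L - x = L by ring, ENNReal.toReal_ofReal hL.le,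
      div_mul_cancel₀ _ hL.ne'] at h1
    linarith
  obtain ⟨y, hy_mem, hy⟩ := hyex
  have hy0 : 0 ≤ y := (lt_of_le_of_lt hx hy_mem.1).le
  have hxy : x ≤ y := hy_mem.1.le
  have hyL : y ≤ x + L := hy_mem.2
  have hdiff : f y - f x = ∫ s in x..y, g s := by
    rw [hftc y hy0, hftc x hx, add_sub_add_left_eq_sub,
      intervalIntegral.integral_interval_sub_left (hloc y hy0) (hloc x hx)]
  have hIoc_sub : Ioc x y ⊆ Ioi (0:ℝ) := fun z hz => lt_of_le_of_lt hx hz.1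
  have hintg2' : IntegrableOn (fun z => ‖g z‖^2) (Ioc x y) volume :=
    intg2.mono_set hIoc_sub
  have hBloc : ∫ s in Ioc x y, ‖g s‖^2 ≤ B := by
    refine le_trans ?_ hB
    exact setIntegral_mono_set intg2 (.of_forall fun y => sq_nonneg _)
      (HasSubset.Subset.eventuallyLE hIoc_sub)
  have hBloc0 : 0 ≤ ∫ s in Ioc x y, ‖g s‖^2 :=
    integral_nonneg fun s => sq_nonneg _
  have hconst : IntegrableOn (fun _ : ℝ => t/2) (Ioc x y) volume :=
    integrableOn_const measure_Ioc_lt_top.ne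
  have key : ‖∫ s in x..y, g s‖
      ≤ (∫ s in Ioc x y, ‖g s‖^2)/(2*t) + t*(y-x)/2 := by
    rw [intervalIntegral.integral_of_le hxy]
    have step1 : ‖∫ s in Ioc x y, g s‖ ≤ ∫ s in Ioc x y, ‖g s‖ := by
      simpa using
        norm_integral_le_integral_norm (μ := volume.restrict (Ioc x y)) g
    have step2 : ∫ s in Ioc x y, ‖g s‖
        ≤ ∫ s in Ioc x y, (‖g s‖^2/(2*t) + t/2) := by
      apply integral_mono_of_nonneg
      · exact .of_forall fun s => norm_nonneg _
      · exact (hintg2'.div_const _).add hconst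
      · refine .of_forall fun s => ?_
        show ‖g s‖ ≤ ‖g s‖^2/(2*t) + t/2
        have h2 : ‖g s‖^2/(2*t) + t/2 = (‖g s‖^2 + t^2)/(2*t) := by
          field_simp
        rw [h2, le_div_iff₀ (by positivity)]
        nlinarith [sq_nonneg (‖g s‖ - t)]
    have step3 : ∫ s in Ioc x y, (‖g s‖^2/(2*t) + t/2)
        = (∫ s in Ioc x y, ‖g s‖^2)/(2*t) + t/2 * (y - x) := by
      rw [integral_add (hintg2'.div_const _) hconst, integral_div, setIntegral_const, measureReal_def,
        Real.volume_Ioc, ENNReal.toReal_ofReal (by linarith), smul_eq_mul]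
      ring
    calc ‖∫ s in Ioc x y, g s‖ ≤ _ := step1
      _ ≤ _ := step2
      _ = _ := step3
      _ = (∫ s in Ioc x y, ‖g s‖^2)/(2*t) + t*(y-x)/2 := by ring
  have hfy : ‖f y‖ ≤ Real.sqrt ((A+ε)/L) := by
    rw [show ‖f y‖ = Real.sqrt (‖f y‖^2) from
      (Real.sqrt_sq (norm_nonneg _)).symm]
    exact Real.sqrt_le_sqrt hy.le
  have tri : ‖f x‖ ≤ ‖f y‖ + ‖f y - f x‖ := by
    have h1 : f x = f y - (f y - f x) := by ring
    calc ‖f x‖ = ‖f y - (f y - f x)‖ := by rw [← h1]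
      _ ≤ ‖f y‖ + ‖f y - f x‖ := norm_sub_le _ _
      _ = _ := rfl
  have h5 : (∫ s in Ioc x y, ‖g s‖^2)/(2*t) ≤ B/(2*t) := by gcongr
  have h6 : t*(y-x)/2 ≤ t*L/2 := by
    have : y - x ≤ L := by linarith
    nlinarith
  rw [hdiff] at tri
  linarith


lemma sup_bound {f g : ℝ → ℂ}
    (hf2 : MemLp f 2 (volume.restrict (Ioi (0:ℝ))))
    (hg2 : MemLp g 2 (volume.restrict (Ioi (0:ℝ))))
    (hloc : ∀ x : ℝ, 0 ≤ x → IntervalIntegrable g volume 0 x)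
    (hftc : ∀ x : ℝ, 0 ≤ x → f x = f 0 + ∫ s in (0:ℝ)..x, g s)
    {m K : ℝ} (hm : 0 < m) (hK : 0 ≤ K)
    (hA : ∫ x in Ioi (0:ℝ), ‖f x‖ ^ 2 ≤ m)
    (hB : ∫ x in Ioi (0:ℝ), ‖g x‖ ^ 2 ≤ K)
    {x : ℝ} (hx : 0 ≤ x) :
    ‖f x‖ ^ 2 ≤ 4 * Real.sqrt m * Real.sqrt (K+1) := by
  set a := Real.sqrt (Real.sqrt m) with ha_def
  set b := Real.sqrt (Real.sqrt (K+1)) with hb_def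
  have ha : 0 < a := Real.sqrt_pos.2 (Real.sqrt_pos.2 hm)
  have hb : 0 < b := Real.sqrt_pos.2 (Real.sqrt_pos.2 (by linarith))
  have ha2 : a^2 = Real.sqrt m := Real.sq_sqrt (Real.sqrt_nonneg _)
  have hb2 : b^2 = Real.sqrt (K+1) := Real.sq_sqrt (Real.sqrt_nonneg _)
  have ha4 : a^4 = m := by
    have : (a^2)^2 = m := by rw [ha2]; exact Real.sq_sqrt hm.le
    nlinarith [this]
  have hb4 : b^4 = K+1 := by
    have : (b^2)^2 = K+1 := by rw [hb2]; exact Real.sq_sqrt (by linarith)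
    nlinarith [this]
  have hfx : ‖f x‖ ≤ 2*(a*b) := by
    refine _root_.le_of_forall_pos_le_add fun δ hδ => ?_
    set L : ℝ := a^2/b^2 with hL_def
    set t : ℝ := b^3/a with ht_def
    have hL : 0 < L := by positivity
    have ht : 0 < t := by positivity
    have hε : 0 < δ^2 * L := by positivity
    have master := pointwise_master hf2 hg2 hloc hftc hA hB hx hL ht hε
    -- bound the three terms
    have term1 : Real.sqrt ((m + δ^2*L)/L) ≤ a*b + δ := by
      have e1 : (m + δ^2*L)/L = a^2*b^2 + δ^2 := by
        rw [hL_def]; field_simp; nlinarith [ha4]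
      rw [e1]
      have e2 : (a*b + δ)^2 = a^2*b^2 + δ^2 + 2*(a*b)*δ := by ring
      have e3 : a^2*b^2 + δ^2 ≤ (a*b + δ)^2 := by
        nlinarith [e2, mul_nonneg (mul_nonneg ha.le hb.le) hδ.le]
      calc Real.sqrt (a^2*b^2 + δ^2) ≤ Real.sqrt ((a*b+δ)^2) := Real.sqrt_le_sqrt e3
        _ = a*b + δ := Real.sqrt_sq (by positivity)
    have term2 : K/(2*t) ≤ a*b/2 := by
      have e : a*b*(2*t) = 2*b^4 := by rw [ht_def]; field_simp
      rw [div_le_div_iff₀ (by positivity) (by norm_num)]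
      have hK4 : K ≤ b^4 := by linarith
      linarith [e]
    have term3 : t*L/2 = a*b/2 := by rw [ht_def, hL_def]; field_simp
    calc ‖f x‖ ≤ Real.sqrt ((m + δ^2*L)/L) + K/(2*t) + t*L/2 := master
      _ ≤ (a*b + δ) + a*b/2 + a*b/2 := by linarith [term1, term2, le_of_eq term3]
      _ = 2*(a*b) + δ := by ring
  have h2 : ‖f x‖^2 ≤ (2*(a*b))^2 := by
    nlinarith [norm_nonneg (f x)]
  calc ‖f x‖^2 ≤ (2*(a*b))^2 := h2
    _ = 4 * a^2 * b^2 := by ring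
    _ = 4 * Real.sqrt m * Real.sqrt (K+1) := by rw [ha2, hb2]

lemma pot_bound {f : ℝ → ℂ}
    (hf2 : MemLp f 2 (volume.restrict (Ioi (0:ℝ))))
    {μ Q : ℝ} (hμ0 : 0 < μ) (hQ : 0 ≤ Q)
    (hsup : ∀ x : ℝ, 0 ≤ x → ‖f x‖^2 ≤ Q) :
    ∫ x in Ioi (0:ℝ), ‖f x‖ ^ (2*μ+2)
      ≤ Q ^ μ * ∫ x in Ioi (0:ℝ), ‖f x‖^2 := by
  have intf2 := sq_abs_integrable hf2
  rw [← integral_const_mul]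
  apply integral_mono_of_nonneg
  · exact .of_forall fun z => Real.rpow_nonneg (norm_nonneg _) _
  · exact intf2.const_mul _
  · filter_upwards [ae_restrict_mem measurableSet_Ioi] with z hz
    have hz0 : (0:ℝ) ≤ z := (le_of_lt hz)
    set r := ‖f z‖ with hr
    have hr0 : 0 ≤ r := norm_nonneg _
    have e1 : r ^ (2*μ+2) = r ^ (2*μ) * r ^ (2:ℝ) := by
      rw [← Real.rpow_add' hr0 (by positivity)]
    have e2 : r ^ (2*μ) = (r^2) ^ μ := by
      rw [← Real.rpow_natCast r 2, ← Real.rpow_mul hr0]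
      norm_num
    have e3 : r ^ (2:ℝ) = r ^ 2 := by
      rw [← Real.rpow_natCast r 2]; norm_num
    have e4 : (r^2) ^ μ ≤ Q ^ μ :=
      Real.rpow_le_rpow (sq_nonneg _) (hsup z hz0) hμ0.le
    calc r ^ (2*μ+2) = (r^2)^μ * r^2 := by rw [e1, e2, e3]
      _ ≤ Q^μ * r^2 := mul_le_mul_of_nonneg_right e4 (sq_nonneg _)

lemma calc_lb {c θ : ℝ} (hc : 0 ≤ c) (hθ0 : 0 ≤ θ) (hθ1 : θ < 1) :
    ∃ C : ℝ, ∀ u : ℝ, 1 ≤ u → C ≤ u/2 - c * u ^ θ := by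
  set T := (2*c+2) ^ (1/(1-θ)) with hT
  have h2c : (1:ℝ) ≤ 2*c+2 := by linarith
  have hTpos : 0 < T := Real.rpow_pos_of_pos (by linarith) _
  have hT1 : 1 ≤ T := Real.one_le_rpow h2c (div_nonneg zero_le_one (by linarith))
  refine ⟨min (1/2 - c*T) 0, fun u hu => ?_⟩
  rcases le_or_gt u T with h | h
  · have huθ : u ^ θ ≤ T := by
      calc u ^ θ ≤ T ^ θ := Real.rpow_le_rpow (by linarith) h hθ0
        _ ≤ T ^ (1:ℝ) := Real.rpow_le_rpow_of_exponent_le hT1 hθ1.le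
        _ = T := Real.rpow_one T
    have h1 : c * u^θ ≤ c * T := mul_le_mul_of_nonneg_left huθ hc
    have h2 : min (1/2 - c*T) 0 ≤ 1/2 - c*T := min_le_left _ _
    linarith
  · have hTu : T ≤ u := h.le
    have hupos : 0 < u := by linarith
    have h1 : u ^ θ = u * u^(θ-1) := by
      have e := Real.rpow_add hupos 1 (θ-1)
      rw [show (1:ℝ)+(θ-1) = θ by ring, Real.rpow_one] at e
      exact e
    have h2 : u^(θ-1) ≤ T^(θ-1) := Real.rpow_le_rpow_of_nonpos hTpos hTu (by linarith)
    have h3 : T^(θ-1) = (2*c+2)⁻¹ := by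
      rw [hT, ← Real.rpow_mul (by linarith : (0:ℝ) ≤ 2*c+2)]
      rw [show 1/(1-θ) * (θ-1) = -1 by
        rw [div_mul_eq_mul_div, one_mul, div_eq_iff (by linarith : (1:ℝ)-θ ≠ 0)]; ring]
      exact Real.rpow_neg_one _
    have h4 : c * u^θ ≤ u/2 := by
      rw [h1]
      have h5 : c * (u * u^(θ-1)) ≤ c * (u * (2*c+2)⁻¹) := by
        rw [← h3]
        exact mul_le_mul_of_nonneg_left
          (mul_le_mul_of_nonneg_left h2 hupos.le) hc
      have h6 : c * (u * (2*c+2)⁻¹) = u * (c/(2*c+2)) := by ring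
      have h7 : c/(2*c+2) ≤ 1/2 := by
        rw [div_le_div_iff₀ (by linarith) (by norm_num)]
        linarith
      have h8 : u * (c/(2*c+2)) ≤ u * (1/2) :=
        mul_le_mul_of_nonneg_left h7 hupos.le
      linarith
    have h9 : min (1/2 - c*T) 0 ≤ 0 := min_le_right _ _
    linarith

end Aux

/-- An element of the energy space `ℰ` of the star graph with `N` edges: an `N`-tuple of
`H¹(0,∞)` functions (each recorded together with its derivative and recovered from it by the
fundamental theorem of calculus, i.e. each component is absolutely continuous on `[0,∞)` with
`L²` derivative), all attaining the same value `vtx` at the vertex. -/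
structure EnergyElem (N : ℕ) where
  ψ : Fin N → ℝ → ℂ
  ψ' : Fin N → ℝ → ℂ
  vtx : ℂ
  mem_L2 : ∀ i, MemLp (ψ i) 2 (volume.restrict (Set.Ioi (0 : ℝ)))
  deriv_mem_L2 : ∀ i, MemLp (ψ' i) 2 (volume.restrict (Set.Ioi (0 : ℝ)))
  deriv_locInt : ∀ i, ∀ x : ℝ, 0 ≤ x → IntervalIntegrable (ψ' i) volume 0 x
  fund_thm : ∀ i, ∀ x : ℝ, 0 ≤ x → ψ i x = ψ i 0 + ∫ s in (0 : ℝ)..x, ψ' i s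
  vertex : ∀ i, ψ i 0 = vtx

/-- The mass `M[Ψ] = Σ_i ∫_0^∞ |ψ_i|² dx`. -/
noncomputable def massOf {N : ℕ} (P : EnergyElem N) : ℝ :=
  ∑ i : Fin N, ∫ x in Set.Ioi (0 : ℝ), ‖P.ψ i x‖ ^ 2

/-- The kinetic term `‖Ψ'‖² = Σ_i ∫_0^∞ |ψ_i′|² dx`. -/
noncomputable def kineticOf {N : ℕ} (P : EnergyElem N) : ℝ :=
  ∑ i : Fin N, ∫ x in Set.Ioi (0 : ℝ), ‖P.ψ' i x‖ ^ 2

/-- The nonlinear term `‖Ψ‖_{2μ+2}^{2μ+2} = Σ_i ∫_0^∞ |ψ_i|^{2μ+2} dx`. -/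
noncomputable def potOf {N : ℕ} (μ : ℝ) (P : EnergyElem N) : ℝ :=
  ∑ i : Fin N, ∫ x in Set.Ioi (0 : ℝ), ‖P.ψ i x‖ ^ (2 * μ + 2)

/-- The NLS energy `E[Ψ] = (1/2)‖Ψ'‖² - (1/(2μ+2))‖Ψ‖_{2μ+2}^{2μ+2} + (α/2)|ψ(0)|²`. -/
noncomputable def energyOf {N : ℕ} (μ α : ℝ) (P : EnergyElem N) : ℝ :=
  (1 / 2) * kineticOf P - (1 / (2 * μ + 2)) * potOf μ P
    + (α / 2) * ‖P.vtx‖ ^ 2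

/-- for `N ≥ 3`, `0 < μ < 2`, `α ∈ ℝ` and `m > 0`, the energy functional
restricted to the mass constraint `M[Ψ] = m` in the energy space `ℰ` is bounded from below. -/
theorem energy_bounded_below_subcritical (N : ℕ) (hN : 3 ≤ N) (μ α : ℝ)
    (hμ0 : 0 < μ) (hμ2 : μ < 2) (m : ℝ) (hm : 0 < m) :
    BddBelow {e : ℝ | ∃ P : EnergyElem N, massOf P = m ∧ e = energyOf μ α P} := by
  have h2μ : (0:ℝ) < 2*μ+2 := by linarith
  set θ : ℝ := max (μ/2) (1/2) with hθ_def
  have hθ0 : (0:ℝ) ≤ θ := le_trans (by norm_num) (le_max_right _ _)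
  have hθ1 : θ < 1 := max_lt (by linarith) (by norm_num)
  set s4 : ℝ := (4*Real.sqrt m) ^ μ with hs4_def
  have hs40 : 0 ≤ s4 := Real.rpow_nonneg (by positivity) _
  set c : ℝ := (1/(2*μ+2)) * (s4 * m) + (|α|/2) * (4*Real.sqrt m) with hc_def
  have hc0 : 0 ≤ c := by
    apply add_nonneg
    · exact mul_nonneg (by positivity) (mul_nonneg hs40 hm.le)
    · positivity
  obtain ⟨C, hC⟩ := calc_lb hc0 hθ0 hθ1
  refine ⟨C - 1/2, fun e he => ?_⟩
  obtain ⟨P, hPm, rfl⟩ := he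
  set K := kineticOf P with hK_def
  have hKi : ∀ i, 0 ≤ ∫ x in Set.Ioi (0:ℝ), ‖P.ψ' i x‖ ^ 2 :=
    fun i => integral_nonneg fun x => sq_nonneg _
  have hAi0 : ∀ i, 0 ≤ ∫ x in Set.Ioi (0:ℝ), ‖P.ψ i x‖ ^ 2 :=
    fun i => integral_nonneg fun x => sq_nonneg _
  have hK0 : 0 ≤ K := Finset.sum_nonneg fun i _ => hKi i
  have hAi : ∀ i, ∫ x in Set.Ioi (0:ℝ), ‖P.ψ i x‖ ^ 2 ≤ m := by
    intro i
    rw [← hPm]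
    exact Finset.single_le_sum (fun j _ => hAi0 j) (Finset.mem_univ i)
  have hBi : ∀ i, ∫ x in Set.Ioi (0:ℝ), ‖P.ψ' i x‖ ^ 2 ≤ K := by
    intro i
    rw [hK_def]
    exact Finset.single_le_sum (fun j _ => hKi j) (Finset.mem_univ i)
  set Q : ℝ := 4 * Real.sqrt m * Real.sqrt (K+1) with hQ_def
  have hQ0 : 0 ≤ Q := by positivity
  have hsup : ∀ i, ∀ x : ℝ, 0 ≤ x → ‖P.ψ i x‖^2 ≤ Q := fun i x hx =>
    sup_bound (P.mem_L2 i) (P.deriv_mem_L2 i) (P.deriv_locInt i) (P.fund_thm i)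
      hm hK0 (hAi i) (hBi i) hx
  set X : ℝ := (K+1) ^ θ with hX_def
  have hK1 : (1:ℝ) ≤ K+1 := by linarith
  have hX0 : 0 ≤ X := Real.rpow_nonneg (by linarith) _
  have hsqrt : Real.sqrt (K+1) = (K+1) ^ ((1:ℝ)/2) := Real.sqrt_eq_rpow _
  have hhalf : (K+1) ^ ((1:ℝ)/2) ≤ X := by
    rw [hX_def]
    exact Real.rpow_le_rpow_of_exponent_le hK1 (le_max_right _ _)
  have hmu2 : (K+1) ^ (μ/2) ≤ X := by
    rw [hX_def]
    exact Real.rpow_le_rpow_of_exponent_le hK1 (le_max_left _ _)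
  have hQμ : Q ^ μ ≤ s4 * X := by
    have e1 : Q ^ μ = s4 * ((K+1) ^ ((1:ℝ)/2)) ^ μ := by
      rw [hQ_def, hsqrt, hs4_def,
        Real.mul_rpow (by positivity) (Real.rpow_nonneg (by linarith : (0:ℝ) ≤ K+1) _)]
    have e2 : ((K+1) ^ ((1:ℝ)/2)) ^ μ = (K+1) ^ (μ/2) := by
      rw [← Real.rpow_mul (by linarith : (0:ℝ) ≤ K+1)]
      ring_nf
    rw [e1, e2]
    exact mul_le_mul_of_nonneg_left hmu2 hs40
  have hQX : Q ≤ 4*Real.sqrt m * X := by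
    rw [hQ_def, hsqrt, mul_assoc, mul_assoc]
    exact mul_le_mul_of_nonneg_left (mul_le_mul_of_nonneg_left hhalf (by positivity)) (by norm_num)
  have hpot : potOf μ P ≤ Q^μ * m := by
    have h1 : potOf μ P ≤ ∑ i : Fin N, Q^μ * ∫ x in Set.Ioi (0:ℝ), ‖P.ψ i x‖^2 :=
      Finset.sum_le_sum fun i _ => pot_bound (P.mem_L2 i) hμ0 hQ0 (hsup i)
    rw [← Finset.mul_sum] at h1
    have h2 : (∑ i : Fin N, ∫ x in Set.Ioi (0:ℝ), ‖P.ψ i x‖^2) = m := hPm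
    rw [h2] at h1
    exact h1
  have hpot' : potOf μ P ≤ s4 * X * m :=
    le_trans hpot (mul_le_mul_of_nonneg_right hQμ hm.le)
  have hvtx : ‖P.vtx‖ ^ 2 ≤ Q := by
    rw [← P.vertex ⟨0, by omega⟩]
    exact hsup _ 0 le_rfl
  have hv0 : 0 ≤ ‖P.vtx‖ ^ 2 := sq_nonneg _
  have hvX : ‖P.vtx‖ ^2 ≤ 4*Real.sqrt m * X := le_trans hvtx hQX
  have hvterm : -((|α|/2) * (4*Real.sqrt m * X)) ≤ (α/2) * ‖P.vtx‖ ^2 := by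
    rcases le_or_gt 0 α with hα | hα
    · have h1 : 0 ≤ (α/2) * ‖P.vtx‖^2 := by positivity
      have h0 : 0 ≤ (|α|/2) * (4*Real.sqrt m * X) := by positivity
      linarith
    · have h2 : (α/2) * (4*Real.sqrt m * X) ≤ (α/2) * ‖P.vtx‖^2 :=
        mul_le_mul_of_nonpos_left hvX (by linarith)
      rw [abs_of_neg hα]
      nlinarith [h2]
  have hpterm : (1/(2*μ+2)) * potOf μ P ≤ (1/(2*μ+2)) * (s4 * X * m) :=
    mul_le_mul_of_nonneg_left hpot' (by positivity)
  have hCK := hC (K+1) hK1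
  rw [← hX_def] at hCK
  have hcX : c * X = (1/(2*μ+2)) * (s4 * X * m) + (|α|/2) * (4*Real.sqrt m * X) := by
    rw [hc_def]; ring
  show C - 1/2 ≤ (1 / 2) * kineticOf P - (1 / (2 * μ + 2)) * potOf μ P
    + (α / 2) * ‖P.vtx‖ ^ 2
  rw [← hK_def]
  linarith [hCK, hpterm, hvterm, hcX]
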